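/- Fix the shared-seed coordinated sampling setup. A function f : V → ℝ_{≥0} has a nonnegative unbiased estimator if and only if for every v ∈ V, lim_{u→0⁺} f̲^{(v)}(u) = f(v). -/

import Mathlib

open MeasureTheory Set Filter Topology

noncomputable section

/-- A shared-seed coordinated sampling scheme on a data domain `V ⊆ ℝ_{≥0}^r`:
continuous non-decreasing seed-to-threshold maps `τ i : [0,1] → ℝ` whose range
infimum is at most the infimum of the `i`-th coordinate over the domain. -/
structure CoordScheme (r : ℕ) where
  V : Set (Fin r → ℝ)
  τ : Fin r → ℝ → ℝ
  V_nonneg : ∀ v ∈ V, ∀ i, 0 ≤ v i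
  τ_cont : ∀ i, ContinuousOn (τ i) (Set.Icc 0 1)
  τ_mono : ∀ i, MonotoneOn (τ i) (Set.Icc 0 1)
  τ_inf : ∀ i, sInf (τ i '' Set.Icc 0 1) ≤ sInf ((fun v => v i) '' V)

namespace CoordScheme

variable {r : ℕ}

/-- The set `S(u,v)` of sampled entries: `i` is sampled iff `v i ≥ τ i u`. -/
def sampled (C : CoordScheme r) (u : ℝ) (v : Fin r → ℝ) : Set (Fin r) :=
  {i | C.τ i u ≤ v i}

/-- The consistent set `V*(u,v)` of data vectors consistent with the outcome `S(u,v)`. -/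
def Vstar (C : CoordScheme r) (u : ℝ) (v : Fin r → ℝ) : Set (Fin r → ℝ) :=
  {z ∈ C.V | ∀ i, (C.τ i u ≤ v i → z i = v i) ∧ (v i < C.τ i u → z i < C.τ i u)}

/-- The lower bound function `f̲(u,v) = inf { f z : z ∈ V*(u,v) }`. -/
def lb (C : CoordScheme r) (f : (Fin r → ℝ) → ℝ) (u : ℝ) (v : Fin r → ℝ) : ℝ :=
  sInf (f '' C.Vstar u v)

/-- An estimator: an integrable function of the outcome (it takes equal values on
data vectors consistent with the same outcome). -/
structure IsEstimator (C : CoordScheme r) (fhat : ℝ → (Fin r → ℝ) → ℝ) : Prop where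
  integrable : ∀ v ∈ C.V, IntegrableOn (fun u => fhat u v) (Set.Ioc (0:ℝ) 1)
  consistent : ∀ u ∈ Set.Ioc (0:ℝ) 1, ∀ v ∈ C.V, ∀ z ∈ C.Vstar u v, fhat u v = fhat u z

/-- A nonnegative estimator. -/
def Nonneg (C : CoordScheme r) (fhat : ℝ → (Fin r → ℝ) → ℝ) : Prop :=
  ∀ u ∈ Set.Ioc (0:ℝ) 1, ∀ v ∈ C.V, 0 ≤ fhat u v

/-- An unbiased estimator of `f`. -/
def Unbiased (C : CoordScheme r) (f : (Fin r → ℝ) → ℝ)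
    (fhat : ℝ → (Fin r → ℝ) → ℝ) : Prop :=
  ∀ v ∈ C.V, (∫ u in Set.Ioc (0:ℝ) 1, fhat u v) = f v

end CoordScheme

/-- Lower convex hull of `g` on `(0,1]`: the pointwise largest convex function
bounded above by `g` there. -/
def lowerHull (g : ℝ → ℝ) (u : ℝ) : ℝ :=
  sSup {y : ℝ | ∃ h : ℝ → ℝ, ConvexOn ℝ (Set.Ioc (0:ℝ) 1) h ∧
      (∀ x ∈ Set.Ioc (0:ℝ) 1, h x ≤ g x) ∧ y = h u}

namespace CoordScheme

variable {r : ℕ}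

/-- The `v`-optimal estimates: the negated derivative of the lower hull of the
lower-bound function `u ↦ f̲(u,v)`. -/
def optEst (C : CoordScheme r) (f : (Fin r → ℝ) → ℝ) (v : Fin r → ℝ) (u : ℝ) : ℝ :=
  -deriv (lowerHull (fun x => C.lb f x v)) u

/-- Cumulative integral `∫_{2^{-j}}^1` of the J estimator (by its defining recursion):
`Jint (j+1) = Jint j + (value on `(2^{-j-1},2^{-j}]`) ⬝ 2^{-j-1}`. -/
def Jint (C : CoordScheme r) (f : (Fin r → ℝ) → ℝ) (v : Fin r → ℝ) : ℕ → ℝ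
  | 0 => 0
  | (j+1) => Jint C f v j +
      ((2:ℝ) ^ (j+1) * (C.lb f ((2:ℝ) ^ (-(j:ℤ))) v - Jint C f v j)) * (2:ℝ) ^ (-(j:ℤ) - 1)

/-- The (constant) value of the J estimator on the dyadic interval `(2^{-j-1}, 2^{-j}]`.
For `j = 0` this is `2 ⬝ f̲(1,v)`; for `j ≥ 1` it is
`2^{j+1} ⬝ ( f̲(2^{-j},v) − ∫_{2^{-j}}^1 f̂⁽ᴶ⁾(x,v) dx )`. -/
def Jval (C : CoordScheme r) (f : (Fin r → ℝ) → ℝ) (v : Fin r → ℝ) (j : ℕ) : ℝ :=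
  (2:ℝ) ^ (j+1) * (C.lb f ((2:ℝ) ^ (-(j:ℤ))) v - Jint C f v j)

/-- The J estimator `f̂⁽ᴶ⁾(u,v)`: on `u ∈ (2^{-j-1}, 2^{-j}]` it takes the value `Jval j`. -/
def Jest (C : CoordScheme r) (f : (Fin r → ℝ) → ℝ) (u : ℝ) (v : Fin r → ℝ) : ℝ :=
  C.Jval f v ⌊-Real.logb 2 u⌋₊

end CoordScheme

namespace Stmt6Aux

private lemma two_zpow_pos (m : ℤ) : (0:ℝ) < 2 ^ m := by positivity

private lemma two_zpow_le_one {m : ℤ} (hm : m ≤ 0) : (2:ℝ) ^ m ≤ 1 :=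
  zpow_le_one_of_nonpos₀ one_le_two hm

private lemma two_zpow_mem {m : ℤ} (hm : m ≤ 0) : (2:ℝ) ^ m ∈ Set.Ioc (0:ℝ) 1 :=
  ⟨two_zpow_pos m, two_zpow_le_one hm⟩

private lemma logb_two_zpow (m : ℤ) : Real.logb 2 ((2:ℝ) ^ m) = m := by
  rw [← Real.rpow_intCast, Real.logb_rpow (by norm_num) (by norm_num)]

private lemma floor_eq {u : ℝ} {j : ℕ}
    (h : u ∈ Set.Ioc ((2:ℝ) ^ (-(j:ℤ) - 1)) ((2:ℝ) ^ (-(j:ℤ)))) :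
    ⌊-Real.logb 2 u⌋₊ = j := by
  have hu : 0 < u := lt_trans (two_zpow_pos _) h.1
  have h1 : Real.logb 2 u ≤ -(j:ℝ) := by
    have := Real.logb_le_logb_of_le one_lt_two hu h.2
    rwa [logb_two_zpow, Int.cast_neg, Int.cast_natCast] at this
  have h2 : -(j:ℝ) - 1 < Real.logb 2 u := by
    have := Real.logb_lt_logb one_lt_two (two_zpow_pos (-(j:ℤ) - 1)) h.1
    rw [logb_two_zpow] at this
    push_cast at this
    linarith
  rw [Nat.floor_eq_iff (by linarith [Nat.cast_nonneg (α := ℝ) j] : (0:ℝ) ≤ -Real.logb 2 u)]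
  constructor <;> linarith

private lemma mem_dyadic {u : ℝ} (hu : u ∈ Set.Ioc (0:ℝ) 1) :
    u ∈ Set.Ioc ((2:ℝ) ^ (-(⌊-Real.logb 2 u⌋₊:ℤ) - 1)) ((2:ℝ) ^ (-(⌊-Real.logb 2 u⌋₊:ℤ))) := by
  set j := ⌊-Real.logb 2 u⌋₊ with hj
  have h0 : 0 ≤ -Real.logb 2 u := by
    have := Real.logb_nonpos one_lt_two hu.1.le hu.2
    linarith
  have hle : (j:ℝ) ≤ -Real.logb 2 u := Nat.floor_le h0
  have hlt : -Real.logb 2 u < j + 1 := Nat.lt_floor_add_one _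
  constructor
  · have : (2:ℝ) ^ ((-(j:ℝ) - 1 : ℝ)) < u :=
      (Real.lt_logb_iff_rpow_lt one_lt_two hu.1).1 (by linarith)
    rwa [show ((-(j:ℝ) - 1 : ℝ)) = ((-(j:ℤ) - 1 : ℤ) : ℝ) by push_cast; ring,
      Real.rpow_intCast] at this
  · have : u ≤ (2:ℝ) ^ ((-(j:ℝ) : ℝ)) :=
      (Real.logb_le_iff_le_rpow one_lt_two hu.1).1 (by linarith)
    rwa [show ((-(j:ℝ) : ℝ)) = ((-(j:ℤ) : ℤ) : ℝ) by push_cast; ring, Real.rpow_intCast] at this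

private lemma iUnion_dyadic :
    (⋃ j : ℕ, Set.Ioc ((2:ℝ) ^ (-(j:ℤ) - 1)) ((2:ℝ) ^ (-(j:ℤ)))) = Set.Ioc (0:ℝ) 1 := by
  ext u
  simp only [Set.mem_iUnion]
  constructor
  · rintro ⟨j, hj⟩
    exact ⟨lt_trans (two_zpow_pos _) hj.1, le_trans hj.2 (two_zpow_le_one (by omega))⟩
  · intro hu
    exact ⟨⌊-Real.logb 2 u⌋₊, mem_dyadic hu⟩

private lemma dyadic_disjoint :
    Pairwise (Function.onFun Disjoint fun j : ℕ => Set.Ioc ((2:ℝ) ^ (-(j:ℤ) - 1)) ((2:ℝ) ^ (-(j:ℤ)))) := by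
  intro i j hij
  rcases hij.lt_or_gt with h | h
  · simp only [Function.onFun]
    rw [Set.Ioc_disjoint_Ioc]
    refine le_trans (min_le_right _ _) (le_trans ?_ (le_max_left _ _))
    exact zpow_le_zpow_right₀ one_le_two (by omega)
  · simp only [Function.onFun]
    rw [Set.Ioc_disjoint_Ioc]
    refine le_trans (min_le_left _ _) (le_trans ?_ (le_max_right _ _))
    exact zpow_le_zpow_right₀ one_le_two (by omega)

private lemma dyadic_sub (j : ℕ) :
    (2:ℝ) ^ (-(j:ℤ)) - (2:ℝ) ^ (-(j:ℤ) - 1) = (2:ℝ) ^ (-(j:ℤ) - 1) := by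
  rw [show (-(j:ℤ)) = (-(j:ℤ) - 1) + 1 by ring, zpow_add₀ (two_ne_zero)]
  ring

private lemma two_zpow_tendsto :
    Tendsto (fun n : ℕ => (2:ℝ) ^ (-(n:ℤ))) atTop (𝓝[>] (0:ℝ)) := by
  apply tendsto_nhdsWithin_of_tendsto_nhds_of_eventually_within
  · have h : ∀ n : ℕ, (2:ℝ) ^ (-(n:ℤ)) = ((2:ℝ)⁻¹) ^ n := fun n => by
      rw [zpow_neg, zpow_natCast, inv_pow]
    simp only [h]
    exact tendsto_pow_atTop_nhds_zero_of_lt_one (by norm_num) (by norm_num)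
  · exact Filter.Eventually.of_forall fun n => two_zpow_pos _

end Stmt6Aux

namespace CoordScheme

open Stmt6Aux

variable {r : ℕ} (C : CoordScheme r) (f : (Fin r → ℝ) → ℝ)

private lemma mem_Vstar_self {v : Fin r → ℝ} (hv : v ∈ C.V) (u : ℝ) : v ∈ C.Vstar u v :=
  ⟨hv, fun _ => ⟨fun _ => rfl, fun h => h⟩⟩

private lemma Vstar_mono {u x : ℝ} (hu : u ∈ Set.Icc (0:ℝ) 1) (hx : x ∈ Set.Icc (0:ℝ) 1)
    (hux : u ≤ x) (v : Fin r → ℝ) : C.Vstar u v ⊆ C.Vstar x v := by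
  rintro z ⟨hzV, hz⟩
  refine ⟨hzV, fun i => ⟨fun h1 => ?_, fun h2 => ?_⟩⟩
  · exact (hz i).1 (le_trans (C.τ_mono i hu hx hux) h1)
  · by_cases h : C.τ i u ≤ v i
    · rw [(hz i).1 h]; exact h2
    · push_neg at h
      exact lt_of_lt_of_le ((hz i).2 h) (C.τ_mono i hu hx hux)

private lemma Vstar_eq_of_mem {x : ℝ} {v z : Fin r → ℝ} (hz : z ∈ C.Vstar x v) :
    C.Vstar x z = C.Vstar x v := by
  obtain ⟨hzV, h⟩ := hz
  ext w
  simp only [Vstar, Set.mem_setOf_eq]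
  refine and_congr_right fun _ => forall_congr' fun i => ?_
  by_cases hc : C.τ i x ≤ v i
  · rw [(h i).1 hc]
  · push_neg at hc
    have hzi := (h i).2 hc
    constructor
    · rintro ⟨_, h2⟩
      exact ⟨fun hle => absurd hle (not_le.2 hc), fun _ => h2 hzi⟩
    · rintro ⟨_, h2⟩
      exact ⟨fun hle => absurd hle (not_le.2 hzi), fun _ => h2 hc⟩

variable (hf : ∀ v ∈ C.V, 0 ≤ f v)
include hf

private lemma lb_bddBelow (u : ℝ) (v : Fin r → ℝ) : BddBelow (f '' C.Vstar u v) :=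
  ⟨0, by rintro y ⟨z, hz, rfl⟩; exact hf z hz.1⟩

private lemma lb_nonneg {v : Fin r → ℝ} (hv : v ∈ C.V) (u : ℝ) : 0 ≤ C.lb f u v :=
  le_csInf ⟨f v, ⟨v, C.mem_Vstar_self hv u, rfl⟩⟩ (by rintro y ⟨z, hz, rfl⟩; exact hf z hz.1)

private lemma lb_le_self {v : Fin r → ℝ} (hv : v ∈ C.V) (u : ℝ) : C.lb f u v ≤ f v :=
  csInf_le (C.lb_bddBelow f hf u v) ⟨v, C.mem_Vstar_self hv u, rfl⟩

private lemma lb_anti {v : Fin r → ℝ} (hv : v ∈ C.V) {u x : ℝ} (hu : u ∈ Set.Ioc (0:ℝ) 1)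
    (hx : x ∈ Set.Ioc (0:ℝ) 1) (hux : u ≤ x) : C.lb f x v ≤ C.lb f u v :=
  csInf_le_csInf (C.lb_bddBelow f hf x v) ⟨f v, ⟨v, C.mem_Vstar_self hv u, rfl⟩⟩
    (Set.image_mono (C.Vstar_mono ⟨hu.1.le, hu.2⟩ ⟨hx.1.le, hx.2⟩ hux v))

omit hf

private lemma lb_congr {x : ℝ} {v z : Fin r → ℝ} (hz : z ∈ C.Vstar x v) :
    C.lb f x z = C.lb f x v := by
  unfold lb
  rw [C.Vstar_eq_of_mem hz]

private lemma Jint_succ (v : Fin r → ℝ) (j : ℕ) :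
    Jint C f v (j + 1) = C.lb f ((2:ℝ) ^ (-(j:ℤ))) v := by
  have h2 : (2:ℝ) ^ (j + 1) * (2:ℝ) ^ (-(j:ℤ) - 1) = 1 := by
    rw [← zpow_natCast (2:ℝ) (j + 1), ← zpow_add₀ two_ne_zero,
      show ((j + 1 : ℕ) : ℤ) + (-(j:ℤ) - 1) = 0 by push_cast; ring, zpow_zero]
  rw [Jint]
  linear_combination (C.lb f ((2:ℝ) ^ (-(j:ℤ))) v - Jint C f v j) * h2

private lemma Jval_mul (v : Fin r → ℝ) (j : ℕ) :
    C.Jval f v j * (2:ℝ) ^ (-(j:ℤ) - 1) = Jint C f v (j + 1) - Jint C f v j := by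
  rw [Jval, Jint]
  ring

include hf

private lemma Jval_nonneg {v : Fin r → ℝ} (hv : v ∈ C.V)
    (j : ℕ) : 0 ≤ C.Jval f v j := by
  cases j with
  | zero =>
    have h := C.lb_nonneg f hf hv ((2:ℝ) ^ (-(0:ℕ):ℤ))
    simp only [Jval, Jint, pow_one, sub_zero]
    positivity
  | succ k =>
    rw [Jval, Jint_succ]
    have hle : C.lb f ((2:ℝ) ^ (-(k:ℤ))) v ≤ C.lb f ((2:ℝ) ^ (-((k+1:ℕ):ℤ))) v := by
      apply C.lb_anti f hf hv (two_zpow_mem (by omega)) (two_zpow_mem (by omega))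
      exact zpow_le_zpow_right₀ one_le_two (by omega)
    have hp : (0:ℝ) < 2 ^ (k + 1 + 1) := by positivity
    nlinarith

end CoordScheme

namespace CoordScheme

open Stmt6Aux

variable {r : ℕ} (C : CoordScheme r) (f : (Fin r → ℝ) → ℝ)

private lemma Jest_eq_on (v : Fin r → ℝ) (j : ℕ) :
    ∀ u ∈ Set.Ioc ((2:ℝ) ^ (-(j:ℤ) - 1)) ((2:ℝ) ^ (-(j:ℤ))), C.Jest f u v = C.Jval f v j :=
  fun _ hu => by rw [Jest, floor_eq hu]

private lemma const_integral_dyadic (c : ℝ) (j : ℕ) :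
    (∫ _ in Set.Ioc ((2:ℝ) ^ (-(j:ℤ) - 1)) ((2:ℝ) ^ (-(j:ℤ))), c) = c * (2:ℝ) ^ (-(j:ℤ) - 1) := by
  rw [setIntegral_const, measureReal_def, Real.volume_Ioc,
    ENNReal.toReal_ofReal (by rw [dyadic_sub]; positivity), smul_eq_mul, dyadic_sub, mul_comm]

private lemma Jval_congr {u : ℝ} (hu : u ∈ Set.Ioc (0:ℝ) 1) {v z : Fin r → ℝ}
    (hz : z ∈ C.Vstar u v) {j : ℕ} (hj : u ≤ (2:ℝ) ^ (-(j:ℤ))) :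
    C.Jval f v j = C.Jval f z j := by
  have hmem : ∀ m : ℤ, m ≤ 0 → u ≤ (2:ℝ) ^ m →
      C.lb f ((2:ℝ) ^ m) z = C.lb f ((2:ℝ) ^ m) v := fun m hm hum =>
    C.lb_congr f (C.Vstar_mono ⟨hu.1.le, hu.2⟩ ⟨(two_zpow_pos m).le, two_zpow_le_one hm⟩ hum v hz)
  cases j with
  | zero =>
    rw [Jval, Jval, Jint, Jint, hmem (-((0:ℕ):ℤ)) (by omega) hj]
  | succ k =>
    have hk : u ≤ (2:ℝ) ^ (-(k:ℤ)) :=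
      le_trans hj (zpow_le_zpow_right₀ one_le_two (by push_cast; omega))
    rw [Jval, Jval, Jint_succ, Jint_succ, hmem (-((k+1:ℕ):ℤ)) (by omega) hj,
      hmem (-(k:ℤ)) (by omega) hk]

private lemma Jest_consistent {u : ℝ} (hu : u ∈ Set.Ioc (0:ℝ) 1) {v z : Fin r → ℝ}
    (hz : z ∈ C.Vstar u v) : C.Jest f u v = C.Jest f u z := by
  rw [Jest, Jest]
  exact C.Jval_congr f hu hz (mem_dyadic hu).2

variable (hf : ∀ v ∈ C.V, 0 ≤ f v)
include hf

private lemma Jest_main {v : Fin r → ℝ} (hv : v ∈ C.V)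
    (hvlim : Tendsto (fun u => C.lb f u v) (𝓝[>] (0:ℝ)) (𝓝 (f v))) :
    IntegrableOn (fun u => C.Jest f u v) (Set.Ioc (0:ℝ) 1) ∧
      (∫ u in Set.Ioc (0:ℝ) 1, C.Jest f u v) = f v := by
  set s : ℕ → Set ℝ := fun j => Set.Ioc ((2:ℝ) ^ (-(j:ℤ) - 1)) ((2:ℝ) ^ (-(j:ℤ))) with hs
  set t : ℕ → ℝ := fun j => C.Jval f v j * (2:ℝ) ^ (-(j:ℤ) - 1) with ht
  have hmeas : ∀ j, MeasurableSet (s j) := fun _ => measurableSet_Ioc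
  have hint : ∀ j, IntegrableOn (fun u => C.Jest f u v) (s j) := fun j =>
    (integrableOn_congr_fun (C.Jest_eq_on f v j) measurableSet_Ioc).2
      (integrableOn_const measure_Ioc_lt_top.ne)
  have hval : ∀ j, (∫ u in s j, C.Jest f u v) = t j := fun j => by
    rw [setIntegral_congr_fun (hmeas j) (C.Jest_eq_on f v j), const_integral_dyadic]
  have hnorm : ∀ j, (∫ u in s j, ‖C.Jest f u v‖) = t j := fun j => by
    rw [setIntegral_congr_fun (μ := volume) (hmeas j) (g := fun _ => C.Jval f v j)
      (fun u huj => by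
        show ‖C.Jest f u v‖ = C.Jval f v j
        rw [C.Jest_eq_on f v j u huj, Real.norm_of_nonneg (C.Jval_nonneg f hf hv j)]),
      const_integral_dyadic]
  have hsum_eq : ∀ n, ∑ j ∈ Finset.range n, t j = Jint C f v n := by
    intro n
    rw [Finset.sum_congr rfl fun j _ => C.Jval_mul f v j, Finset.sum_range_sub (Jint C f v)]
    simp [Jint]
  have hJintT : Tendsto (Jint C f v) atTop (𝓝 (f v)) := by
    rw [← tendsto_add_atTop_iff_nat 1]
    have he : (fun n : ℕ => Jint C f v (n + 1)) = fun n : ℕ => C.lb f ((2:ℝ) ^ (-(n:ℤ))) v :=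
      funext fun n => C.Jint_succ f v n
    rw [he]
    exact hvlim.comp two_zpow_tendsto
  have htnonneg : ∀ j, 0 ≤ t j := fun j =>
    mul_nonneg (C.Jval_nonneg f hf hv j) (two_zpow_pos _).le
  have hbdd : ∀ n, ∑ j ∈ Finset.range n, t j ≤ f v := by
    intro n
    rw [hsum_eq]
    cases n with
    | zero => simpa [Jint] using hf v hv
    | succ k => rw [C.Jint_succ f v k]; exact C.lb_le_self f hf hv _
  have hsummable : Summable t := summable_of_sum_range_le htnonneg hbdd
  have hHasSum : HasSum t (f v) := by
    have h2 := hsummable.hasSum.tendsto_sum_nat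
    have h3 : Tendsto (fun n => ∑ j ∈ Finset.range n, t j) atTop (𝓝 (f v)) :=
      hJintT.congr fun n => (hsum_eq n).symm
    have h1 := hsummable.hasSum
    rwa [tendsto_nhds_unique h2 h3] at h1
  have hIOn : IntegrableOn (fun u => C.Jest f u v) (Set.Ioc (0:ℝ) 1) := by
    rw [← iUnion_dyadic]
    exact integrableOn_iUnion_of_summable_integral_norm hint
      (hsummable.congr fun j => (hnorm j).symm)
  refine ⟨hIOn, ?_⟩
  have hHS2 : HasSum (fun j => ∫ u in s j, C.Jest f u v)
      (∫ u in Set.Ioc (0:ℝ) 1, C.Jest f u v) := by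
    rw [← iUnion_dyadic]
    exact hasSum_integral_iUnion hmeas dyadic_disjoint (by rwa [iUnion_dyadic])
  have hHS3 : HasSum t (∫ u in Set.Ioc (0:ℝ) 1, C.Jest f u v) :=
    (funext hval : (fun j => ∫ u in s j, C.Jest f u v) = t) ▸ hHS2
  exact hHS3.unique hHasSum

end CoordScheme

/-- `f` has a nonnegative unbiased estimator iff for every `v ∈ V`,
`lim_{u→0⁺} f̲⁽ᵛ⁾(u) = f(v)`. -/
theorem stmt6 {r : ℕ} (C : CoordScheme r) (f : (Fin r → ℝ) → ℝ)
    (hf : ∀ v ∈ C.V, 0 ≤ f v) :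
    (∃ fhat : ℝ → (Fin r → ℝ) → ℝ,
        C.IsEstimator fhat ∧ C.Nonneg fhat ∧ C.Unbiased f fhat) ↔
    ∀ v ∈ C.V, Filter.Tendsto (fun u => C.lb f u v) (𝓝[>] (0:ℝ)) (𝓝 (f v)) := by
  constructor
  · rintro ⟨fhat, hEst, hNN, hUB⟩ v hv
    have hIntV : IntegrableOn (fun u => fhat u v) (Set.Ioc (0:ℝ) 1) := hEst.integrable v hv
    have key : ∀ u ∈ Set.Ioc (0:ℝ) 1, (∫ x in Set.Ioc u 1, fhat x v) ≤ C.lb f u v := by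
      intro u hu
      refine le_csInf ⟨f v, v, C.mem_Vstar_self hv u, rfl⟩ ?_
      rintro y ⟨z, hz, rfl⟩
      have hzV : z ∈ C.V := hz.1
      have hcong : (∫ x in Set.Ioc u 1, fhat x v) = ∫ x in Set.Ioc u 1, fhat x z := by
        refine setIntegral_congr_fun measurableSet_Ioc fun x hx => ?_
        have hx1 : x ∈ Set.Ioc (0:ℝ) 1 := ⟨lt_trans hu.1 hx.1, hx.2⟩
        exact hEst.consistent x hx1 v hv z
          (C.Vstar_mono ⟨hu.1.le, hu.2⟩ ⟨hx1.1.le, hx1.2⟩ hx.1.le v hz)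
      rw [hcong, ← hUB z hzV]
      refine setIntegral_mono_set (hEst.integrable z hzV) ?_ ?_
      · exact (ae_restrict_iff' measurableSet_Ioc).2
          (Filter.Eventually.of_forall fun x hx => hNN x hx z hzV)
      · exact HasSubset.Subset.eventuallyLE (Set.Ioc_subset_Ioc_left hu.1.le)
    have hmono : Monotone (fun n : ℕ => Set.Ioc ((1:ℝ)/(n+1)) 1) := by
      intro m n hmn
      apply Set.Ioc_subset_Ioc_left
      apply one_div_le_one_div_of_le
      · positivity
      · exact_mod_cast Nat.add_le_add_right hmn 1
    have hunion : (⋃ n : ℕ, Set.Ioc ((1:ℝ)/(n+1)) 1) = Set.Ioc (0:ℝ) 1 := by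
      ext x
      simp only [Set.mem_iUnion, Set.mem_Ioc]
      constructor
      · rintro ⟨n, h1, h2⟩
        exact ⟨lt_trans (by positivity) h1, h2⟩
      · rintro ⟨h1, h2⟩
        obtain ⟨n, hn⟩ := exists_nat_one_div_lt h1
        exact ⟨n, by exact_mod_cast hn, h2⟩
    have hT : Tendsto (fun n : ℕ => ∫ x in Set.Ioc ((1:ℝ)/(n+1)) 1, fhat x v) atTop
        (𝓝 (f v)) := by
      have h := tendsto_setIntegral_of_monotone (fun _ => measurableSet_Ioc) hmono
        (by rw [hunion]; exact hIntV)
      rwa [hunion, hUB v hv] at h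
    rw [Metric.tendsto_nhdsWithin_nhds]
    intro ε hε
    obtain ⟨n, hn⟩ := (hT.eventually (eventually_gt_nhds (by linarith : f v - ε < f v))).exists
    have hu0mem : (1:ℝ)/(n+1) ∈ Set.Ioc (0:ℝ) 1 := by
      constructor
      · positivity
      · rw [div_le_one (by positivity)]
        linarith [Nat.cast_nonneg (α := ℝ) n]
    refine ⟨(1:ℝ)/(n+1), hu0mem.1, fun {u} hu hdist => ?_⟩
    have hupos : 0 < u := Set.mem_Ioi.mp hu
    have hule : u ≤ (1:ℝ)/(n+1) := by
      rw [Real.dist_eq, sub_zero, abs_of_pos hupos] at hdist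
      exact hdist.le
    have hu1 : u ∈ Set.Ioc (0:ℝ) 1 := ⟨hupos, le_trans hule hu0mem.2⟩
    have h1 : C.lb f u v ≤ f v := C.lb_le_self f hf hv u
    have h2 : f v - ε < C.lb f u v :=
      lt_of_lt_of_le hn (le_trans (key _ hu0mem) (C.lb_anti f hf hv hu1 hu0mem hule))
    rw [Real.dist_eq, abs_lt]
    constructor <;> linarith
  · intro hlim
    refine ⟨C.Jest f, ⟨fun v hv => (C.Jest_main f hf hv (hlim v hv)).1,
      fun u hu v _ z hz => C.Jest_consistent f hu hz⟩,
      fun u _ v hv => C.Jval_nonneg f hf hv _,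
      fun v hv => (C.Jest_main f hf hv (hlim v hv)).2⟩
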